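/- For every field K of characteristic zero, every q ∈ K, and every n ≥ 1, the set {f(1) : f belongs to the unital K-subalgebra of endomorphisms of K[x_1,…,x_n] generated by the operators P_k, k ≥ 1} is exactly the set of symmetric polynomials in K[x_1,…,x_n]. In particular, every symmetric polynomial with zero constant term is q-hit. -/

import Mathlib

open MvPolynomial

/-- The `q`-Steenrod operator `P_k` on `K[x_1,…,x_n]`:
`P_k(p) = ∑ i, x_i^k • (p + q • x_i • ∂p/∂x_i)`. -/
noncomputable def steenrodP (K : Type) [Field K] (q : K) (n k : ℕ) :
    Module.End K (MvPolynomial (Fin n) K) :=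
  ∑ i : Fin n, (LinearMap.mulLeft K (X i ^ k : MvPolynomial (Fin n) K)) ∘ₗ
    (LinearMap.id + q • ((LinearMap.mulLeft K (X i : MvPolynomial (Fin n) K)) ∘ₗ
      (pderiv i).toLinearMap))

/-- The dual `q`-Steenrod operator `P_k^*` on `K[x_1,…,x_n]`:
`P_k^*(p) = ∑ i, (∂^k p/∂x_i^k + q • x_i • ∂^{k+1} p/∂x_i^{k+1})`. -/
noncomputable def steenrodPdual (K : Type) [Field K] (q : K) (n k : ℕ) :
    Module.End K (MvPolynomial (Fin n) K) :=
  ∑ i : Fin n,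
    ((((pderiv i).toLinearMap : Module.End K (MvPolynomial (Fin n) K)) ^ k)
      + q • ((LinearMap.mulLeft K (X i : MvPolynomial (Fin n) K)) ∘ₗ
          ((((pderiv i).toLinearMap : Module.End K (MvPolynomial (Fin n) K)) ^ (k+1) : Module.End K (MvPolynomial (Fin n) K)) : MvPolynomial (Fin n) K →ₗ[K] MvPolynomial (Fin n) K)))

/-- The bilinear form `B(p,r) = ∑_m m! ⬝ p_m ⬝ r_m` over exponent vectors `m`. -/
noncomputable def formB {K : Type} [Field K] {n : ℕ} (p r : MvPolynomial (Fin n) K) : K :=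
  ∑ m ∈ p.support, (∏ i, ((m i).factorial : K)) * p.coeff m * r.coeff m

/-- `p` is `q`-harmonic if it is killed by all the dual `q`-Steenrod operators. -/
def IsQHarmonic {K : Type} [Field K] {n : ℕ} (q : K) (p : MvPolynomial (Fin n) K) : Prop :=
  ∀ k : ℕ, 1 ≤ k → steenrodPdual K q n k p = 0

/-- The space of `q`-hit polynomials: the span of the ranges of the `P_k`, `k ≥ 1`. -/
noncomputable def qHit (K : Type) [Field K] (q : K) (n : ℕ) :
    Submodule K (MvPolynomial (Fin n) K) :=
  Submodule.span K (⋃ k ∈ {k : ℕ | 1 ≤ k}, Set.range (steenrodP K q n k))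

/-- For a list `λ = [λ_1, …, λ_m]`, the operator `P_λ = P_{λ_1} ∘ ⋯ ∘ P_{λ_m}`. -/
noncomputable def steenrodPList (K : Type) [Field K] (q : K) (n : ℕ) (l : List ℕ) :
    Module.End K (MvPolynomial (Fin n) K) :=
  (l.map (steenrodP K q n)).prod

namespace SteenrodAux

variable {K : Type} [Field K] {n : ℕ}

/-- evaluation at 1 as a linear map -/
noncomputable def ev1 : Module.End K (MvPolynomial (Fin n) K) →ₗ[K] MvPolynomial (Fin n) K where
  toFun f := f 1
  map_add' f g := rfl
  map_smul' c f := rfl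

@[simp] lemma ev1_apply (f : Module.End K (MvPolynomial (Fin n) K)) : ev1 f = f 1 := rfl

/-- the derivation-like operator `∑ i, X i^(k+1) ∂_i` as a linear map -/
noncomputable def Dlin (k : ℕ) : Module.End K (MvPolynomial (Fin n) K) :=
  ∑ i : Fin n, (LinearMap.mulLeft K (X i ^ (k+1) : MvPolynomial (Fin n) K)) ∘ₗ
    (pderiv i).toLinearMap

lemma Dlin_apply (k : ℕ) (p : MvPolynomial (Fin n) K) :
    Dlin k p = ∑ i : Fin n, X i ^ (k+1) * pderiv i p := by
  simp [Dlin]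

lemma Dlin_mul (k : ℕ) (a b : MvPolynomial (Fin n) K) :
    Dlin k (a * b) = a * Dlin k b + b * Dlin k a := by
  simp only [Dlin_apply, pderiv_mul, Finset.mul_sum, ← Finset.sum_add_distrib]
  congr 1; ext i; ring

lemma Dlin_one (k : ℕ) : Dlin k (1 : MvPolynomial (Fin n) K) = 0 := by
  simp [Dlin_apply]

lemma pderiv_psum (j : ℕ) (i : Fin n) :
    pderiv i (psum (Fin n) K j) = (j : MvPolynomial (Fin n) K) * X i ^ (j-1) := by
  simp only [psum, map_sum, pderiv_pow]
  rw [Finset.sum_eq_single i]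
  · rw [pderiv_X_self, mul_one]
  · intro t _ ht
    rw [pderiv_X_of_ne ht, mul_zero]
  · simp

lemma Dlin_psum (k j : ℕ) (hj : 1 ≤ j) :
    Dlin k (psum (Fin n) K j) = (j : K) • psum (Fin n) K (j + k) := by
  simp only [Dlin_apply]
  simp only [pderiv_psum]
  simp only [psum, Finset.smul_sum]
  congr 1; ext i
  rw [smul_eq_C_mul, C_eq_coe_nat]
  rw [show j + k = (j - 1) + (k + 1) by omega, pow_add]
  ring

lemma steenrodP_apply_eq (q : K) (k : ℕ) (p : MvPolynomial (Fin n) K) :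
    steenrodP K q n k p = psum (Fin n) K k * p + q • Dlin k p := by
  simp only [steenrodP, LinearMap.sum_apply, LinearMap.comp_apply, LinearMap.add_apply,
    LinearMap.id_apply, LinearMap.smul_apply, LinearMap.mulLeft_apply, Dlin_apply, psum,
    Derivation.coeFn_coe,
    Finset.sum_mul, Finset.smul_sum]
  rw [← Finset.sum_add_distrib]
  congr 1; ext i
  rw [mul_add, mul_smul_comm, smul_eq_C_mul, smul_eq_C_mul]
  ring

lemma rename_Dlin (k : ℕ) (e : Equiv.Perm (Fin n)) (p : MvPolynomial (Fin n) K) :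
    rename e (Dlin k p) = Dlin k (rename e p) := by
  simp only [Dlin_apply, map_sum, map_mul, map_pow, rename_X, pderiv_rename e.injective]
  exact Fintype.sum_equiv e _ _ (fun i => by rw [pderiv_rename e.injective])

lemma steenrodP_symm (q : K) (k : ℕ) {p : MvPolynomial (Fin n) K} (hp : p.IsSymmetric) :
    (steenrodP K q n k p).IsSymmetric := by
  intro e
  rw [steenrodP_apply_eq, map_add, map_mul, map_smul, rename_Dlin, rename_psum, hp e]

variable (K) (n) in
/-- the generating set of Steenrod operators -/
def genSet (q : K) : Set (Module.End K (MvPolynomial (Fin n) K)) :=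
  {g | ∃ k : ℕ, 1 ≤ k ∧ g = steenrodP K q n k}

lemma adjoin_symm {q : K} {f : Module.End K (MvPolynomial (Fin n) K)}
    (hf : f ∈ Algebra.adjoin K (genSet K n q)) :
    ∀ p : MvPolynomial (Fin n) K, p.IsSymmetric → (f p).IsSymmetric := by
  induction hf using Algebra.adjoin_induction with
  | mem g hg =>
    obtain ⟨k, hk, rfl⟩ := hg
    exact fun p hp => steenrodP_symm q k hp
  | algebraMap r =>
    intro p hp
    have : (algebraMap K (Module.End K (MvPolynomial (Fin n) K)) r) p = r • p := rfl
    rw [this]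
    exact hp.smul r
  | add x y hx hy ihx ihy =>
    intro p hp
    exact (ihx p hp).add (ihy p hp)
  | mul x y hx hy ihx ihy =>
    intro p hp
    exact ihx _ (ihy p hp)

variable (K) (n) in
/-- the module of values f(1) -/
noncomputable def Smod (q : K) : Submodule K (MvPolynomial (Fin n) K) :=
  (Subalgebra.toSubmodule (Algebra.adjoin K (genSet K n q))).map ev1

lemma mem_Smod_iff {q : K} {p : MvPolynomial (Fin n) K} :
    p ∈ Smod K n q ↔ ∃ f ∈ Algebra.adjoin K (genSet K n q), f 1 = p := by
  simp [Smod, Submodule.mem_map, Subalgebra.mem_toSubmodule]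

variable (K) (n) in
/-- products of power sums over lists of length `m` with entries `≥ 1` -/
def prodSet (m : ℕ) : Set (MvPolynomial (Fin n) K) :=
  {r | ∃ l : List ℕ, l.length = m ∧ (∀ j ∈ l, 1 ≤ j) ∧ (l.map (psum (Fin n) K)).prod = r}

lemma mul_psum_span {j m : ℕ} (hj : 1 ≤ j) {x : MvPolynomial (Fin n) K}
    (hx : x ∈ Submodule.span K (prodSet K n m)) :
    psum (Fin n) K j * x ∈ Submodule.span K (prodSet K n (m + 1)) := by
  induction hx using Submodule.span_induction with
  | mem r hr =>
    obtain ⟨l, hl, hl1, rfl⟩ := hr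
    exact Submodule.subset_span ⟨j :: l, by simp [hl], by
      intro a ha
      rcases List.mem_cons.1 ha with rfl | ha
      · exact hj
      · exact hl1 a ha, by simp⟩
  | zero => simp
  | add a b _ _ iha ihb => rw [mul_add]; exact Submodule.add_mem _ iha ihb
  | smul c a _ iha => rw [mul_smul_comm]; exact Submodule.smul_mem _ c iha

lemma Dlin_prod_mem (k : ℕ) (t : List ℕ) (ht : ∀ j ∈ t, 1 ≤ j) :
    Dlin k ((t.map (psum (Fin n) K)).prod) ∈ Submodule.span K (prodSet K n t.length) := by
  induction t with
  | nil => simp [Dlin_one]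
  | cons j t ih =>
    have hj : 1 ≤ j := ht j (List.mem_cons_self)
    have ht' : ∀ a ∈ t, 1 ≤ a := fun a ha => ht a (List.mem_cons_of_mem j ha)
    simp only [List.map_cons, List.prod_cons, List.length_cons]
    rw [Dlin_mul, Dlin_psum k j hj]
    refine Submodule.add_mem _ (mul_psum_span hj (ih ht')) ?_
    rw [mul_smul_comm]
    refine Submodule.smul_mem _ _ (Submodule.subset_span ?_)
    refine ⟨(j + k) :: t, by simp, ?_, by simp [mul_comm]⟩
    intro a ha
    rcases List.mem_cons.1 ha with rfl | ha
    · omega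
    · exact ht' a ha

lemma steenrodP_mem_qHit (q : K) {k : ℕ} (hk : 1 ≤ k) (p : MvPolynomial (Fin n) K) :
    steenrodP K q n k p ∈ qHit K q n :=
  Submodule.subset_span (Set.mem_biUnion hk ⟨p, rfl⟩)

lemma key (q : K) : ∀ (m : ℕ) (t : List ℕ), t.length = m → (∀ j ∈ t, 1 ≤ j) →
    (t.map (psum (Fin n) K)).prod ∈ Smod K n q ∧
      (t ≠ [] → (t.map (psum (Fin n) K)).prod ∈ qHit K q n) := by
  intro m
  induction m with
  | zero =>
    intro t ht _
    rw [List.length_eq_zero_iff] at ht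
    subst ht
    refine ⟨mem_Smod_iff.mpr ⟨1, Subalgebra.one_mem _, rfl⟩, by simp⟩
  | succ m ih =>
    rintro (_ | ⟨j, t⟩) ht hge
    · simp at ht
    · have hj : 1 ≤ j := hge j (List.mem_cons_self)
      have ht' : ∀ a ∈ t, 1 ≤ a := fun a ha => hge a (List.mem_cons_of_mem j ha)
      have htl : t.length = m := by simpa using ht
      obtain ⟨f, hf, hf1⟩ := mem_Smod_iff.mp (ih t htl ht').1
      have hspanS : Submodule.span K (prodSet K n m) ≤ Smod K n q := by
        rw [Submodule.span_le]
        rintro r ⟨l, hl, hl1, rfl⟩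
        exact (ih l hl hl1).1
      have hD : Dlin j ((t.map (psum (Fin n) K)).prod) ∈ Submodule.span K (prodSet K n m) := by
        rw [← htl]; exact Dlin_prod_mem j t ht'
      set g := steenrodP K q n j * f with hg_def
      have hg : g ∈ Algebra.adjoin K (genSet K n q) :=
        mul_mem (Algebra.subset_adjoin ⟨j, hj, rfl⟩) hf
      have hg1 : g 1 = psum (Fin n) K j * (t.map (psum (Fin n) K)).prod
          + q • Dlin j ((t.map (psum (Fin n) K)).prod) := by
        rw [hg_def, Module.End.mul_apply, hf1, steenrodP_apply_eq]
      have heq : psum (Fin n) K j * (t.map (psum (Fin n) K)).prod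
          = g 1 - q • Dlin j ((t.map (psum (Fin n) K)).prod) := by
        rw [hg1, add_sub_cancel_right]
      simp only [List.map_cons, List.prod_cons]
      constructor
      · rw [heq]
        exact Submodule.sub_mem _ (mem_Smod_iff.mpr ⟨g, hg, rfl⟩)
          (Submodule.smul_mem _ _ (hspanS hD))
      · intro _
        rw [heq]
        refine Submodule.sub_mem _ ?_ ?_
        · rw [hg_def, Module.End.mul_apply]
          exact steenrodP_mem_qHit q hj _
        · cases t with
          | nil => simp [Dlin_one]
          | cons a t'' =>
            have hle : Submodule.span K (prodSet K n m) ≤ qHit K q n := by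
              rw [Submodule.span_le]
              rintro r ⟨l, hl, hl1, rfl⟩
              refine (ih l hl hl1).2 ?_
              intro h
              rw [h] at hl
              simp only [List.length_cons] at htl
              simp only [List.length_nil] at hl
              omega
            exact Submodule.smul_mem _ _ (hle hD)

variable (K) (n) in
/-- the set of power sums `psum j`, `j ≥ 1` -/
def psumSet : Set (MvPolynomial (Fin n) K) := {r | ∃ j : ℕ, 1 ≤ j ∧ psum (Fin n) K j = r}

lemma esymm_mem [CharZero K] (k : ℕ) :
    esymm (Fin n) K k ∈ Algebra.adjoin K (psumSet K n) := by
  induction k using Nat.strong_induction_on with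
  | _ k ih =>
    rcases Nat.eq_zero_or_pos k with rfl | hk
    · rw [esymm_zero]
      exact one_mem _
    · have hkK : ((k : K)) ≠ 0 := Nat.cast_ne_zero.mpr hk.ne'
      have h1 : ((k : MvPolynomial (Fin n) K)) * esymm (Fin n) K k
          = (k : K) • esymm (Fin n) K k := by
        rw [smul_eq_C_mul, C_eq_coe_nat]
      rw [show esymm (Fin n) K k
          = (k : K)⁻¹ • (((k : MvPolynomial (Fin n) K)) * esymm (Fin n) K k) by
        rw [h1, inv_smul_smul₀ hkK]]
      rw [mul_esymm_eq_sum (Fin n) K k]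
      refine Subalgebra.smul_mem _ ?_ _
      refine mul_mem (pow_mem (neg_mem (one_mem _)) _) ?_
      refine sum_mem ?_
      rintro ⟨a1, a2⟩ ha
      simp only [Finset.mem_filter, Finset.HasAntidiagonal.mem_antidiagonal] at ha
      refine mul_mem (mul_mem (pow_mem (neg_mem (one_mem _)) _) (ih a1 ha.2)) ?_
      exact Algebra.subset_adjoin ⟨a2, by omega, rfl⟩

lemma symm_mem_adjoin_psum [CharZero K] {p : MvPolynomial (Fin n) K}
    (hp : p.IsSymmetric) : p ∈ Algebra.adjoin K (psumSet K n) := by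
  obtain ⟨r, hr⟩ := esymmAlgHom_surjective (σ := Fin n) (R := K) (n := n)
    (by simp) ⟨p, (mem_symmetricSubalgebra p).mpr hp⟩
  have hev : aeval (fun i : Fin n => esymm (Fin n) K (i + 1)) r = p := by
    have := congrArg Subtype.val hr
    rwa [esymmAlgHom_apply] at this
  have hmem : p ∈ Algebra.adjoin K (Set.range fun i : Fin n => esymm (Fin n) K (i + 1)) := by
    rw [Algebra.adjoin_range_eq_range_aeval]
    exact ⟨r, hev⟩
  refine Algebra.adjoin_le ?_ hmem
  rintro _ ⟨i, rfl⟩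
  exact esymm_mem _

variable (K) (n) in
/-- products of power sums over arbitrary lists with entries ≥ 1 -/
def prodSetAll : Set (MvPolynomial (Fin n) K) :=
  {r | ∃ l : List ℕ, (∀ j ∈ l, 1 ≤ j) ∧ (l.map (psum (Fin n) K)).prod = r}

lemma list_extract : ∀ L : List (MvPolynomial (Fin n) K), (∀ y ∈ L, y ∈ psumSet K n) →
    ∃ l : List ℕ, (∀ j ∈ l, 1 ≤ j) ∧ l.map (psum (Fin n) K) = L := by
  intro L
  induction L with
  | nil => exact fun _ => ⟨[], by simp, by simp⟩
  | cons y L ih =>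
    intro h
    obtain ⟨j, hj, rfl⟩ := h y (List.mem_cons_self)
    obtain ⟨l, hl1, hl2⟩ := ih (fun z hz => h z (List.mem_cons_of_mem _ hz))
    refine ⟨j :: l, ?_, by simp [hl2]⟩
    intro a ha
    rcases List.mem_cons.1 ha with rfl | ha
    · exact hj
    · exact hl1 a ha

lemma symm_mem_span [CharZero K] {p : MvPolynomial (Fin n) K} (hp : p.IsSymmetric) :
    p ∈ Submodule.span K (prodSetAll K n) := by
  have h1 := symm_mem_adjoin_psum hp
  rw [← Subalgebra.mem_toSubmodule, Algebra.adjoin_eq_span] at h1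
  refine Submodule.span_mono ?_ h1
  intro x hx
  obtain ⟨L, hL, rfl⟩ := Submonoid.exists_list_of_mem_closure hx
  obtain ⟨l, hl1, hl2⟩ := list_extract L hL
  exact ⟨l, hl1, by rw [hl2]⟩

lemma constantCoeff_psum_eq_zero {k : ℕ} (hk : k ≠ 0) :
    constantCoeff (psum (Fin n) K k) = 0 := by
  simp [psum, zero_pow hk]

lemma constantCoeff_Dlin (k : ℕ) (p : MvPolynomial (Fin n) K) :
    constantCoeff (Dlin k p) = 0 := by
  simp [Dlin_apply]

lemma constantCoeff_qHit (q : K) {z : MvPolynomial (Fin n) K} (hz : z ∈ qHit K q n) :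
    constantCoeff z = 0 := by
  induction hz using Submodule.span_induction with
  | mem r hr =>
    simp only [Set.mem_iUnion, Set.mem_range, Set.mem_setOf_eq] at hr
    obtain ⟨k, hk, p, rfl⟩ := hr
    rw [steenrodP_apply_eq, map_add, map_mul, smul_eq_C_mul, map_mul,
      constantCoeff_psum_eq_zero (by omega), constantCoeff_Dlin]
    ring
  | zero => simp
  | add a b _ _ iha ihb => rw [map_add, iha, ihb, add_zero]
  | smul c a _ iha => rw [smul_eq_C_mul, map_mul, iha, mul_zero]

end SteenrodAux

/-- The set `{f(1) : f in the unital subalgebra of `End K[x_1,…,x_n]`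
generated by the `P_k`, `k ≥ 1`}` is exactly the set of symmetric polynomials; in
particular, every symmetric polynomial with zero constant term is `q`-hit. -/


theorem steenrodP_algebra_one_eq_symmetric (K : Type) [Field K] [CharZero K] (q : K)
    (n : ℕ) (hn : 1 ≤ n) :
    {p : MvPolynomial (Fin n) K |
        ∃ f ∈ Algebra.adjoin K {g : Module.End K (MvPolynomial (Fin n) K) |
            ∃ k : ℕ, 1 ≤ k ∧ g = steenrodP K q n k},
          f 1 = p}
      = {p : MvPolynomial (Fin n) K | p.IsSymmetric} ∧
    ∀ p : MvPolynomial (Fin n) K, p.IsSymmetric → constantCoeff p = 0 →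
      p ∈ qHit K q n := by
  constructor
  · ext p
    simp only [Set.mem_setOf_eq]
    constructor
    · rintro ⟨f, hf, rfl⟩
      exact SteenrodAux.adjoin_symm hf 1 MvPolynomial.IsSymmetric.one
    · intro hp
      have h1 := SteenrodAux.symm_mem_span hp
      have hle : Submodule.span K (SteenrodAux.prodSetAll K n) ≤ SteenrodAux.Smod K n q := by
        rw [Submodule.span_le]
        rintro r ⟨l, hl1, rfl⟩
        exact (SteenrodAux.key q l.length l rfl hl1).1
      exact SteenrodAux.mem_Smod_iff.mp (hle h1)
  · intro p hp hc
    have h1 := SteenrodAux.symm_mem_span hp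
    have hle : Submodule.span K (SteenrodAux.prodSetAll K n) ≤
        (Submodule.span K {(1 : MvPolynomial (Fin n) K)}) ⊔ qHit K q n := by
      rw [Submodule.span_le]
      rintro r ⟨l, hl1, rfl⟩
      rcases eq_or_ne l [] with rfl | hne
      · exact Submodule.mem_sup_left (Submodule.subset_span (by simp))
      · exact Submodule.mem_sup_right ((SteenrodAux.key q l.length l rfl hl1).2 hne)
    obtain ⟨y, hy, z, hz, hyz⟩ := Submodule.mem_sup.mp (hle h1)
    obtain ⟨c, rfl⟩ := Submodule.mem_span_singleton.mp hy
    have hcz := SteenrodAux.constantCoeff_qHit q hz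
    have h2 : constantCoeff (c • (1 : MvPolynomial (Fin n) K)) = 0 := by
      have h3 := congrArg constantCoeff hyz
      rw [map_add, hcz, add_zero, hc] at h3
      exact h3
    have hc0 : c = 0 := by simpa [smul_eq_C_mul] using h2
    rw [← hyz, hc0, zero_smul, zero_add]
    exact hz
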